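/- Contraction of the SISO multiuser waterfilling mapping: with wf_q(p_{−q}) the Euclidean projection of −insr_q(p_{−q}) onto the simplex P_q, where [insr_q(p_{−q})]_k = (σ_q²(k) + Σ_{r≠q}|H_{rq}(k)|² p_r(k))/|H_{qq}(k)|², one has for all feasible p⁽¹⁾, p⁽²⁾ and each q: ‖wf_q(p_{−q}⁽¹⁾) − wf_q(p_{−q}⁽²⁾)‖₂ ≤ Σ_{r≠q} (max_k |H_{rq}(k)|²/|H_{qq}(k)|²) ‖p_r⁽¹⁾ − p_r⁽²⁾‖₂. -/

import Mathlib

/-- Euclidean norm on `ℝᴺ`. -/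
noncomputable def eucNorm {N : ℕ} (z : Fin N → ℝ) : ℝ :=
  Real.sqrt (∑ k, (z k) ^ 2)

/-- The interference-to-signal vector `insr_q(p_{−q})` with components
`(σ_q²(k) + Σ_{r≠q} |H_rq(k)|² p_r(k)) / |H_qq(k)|²`. -/
noncomputable def insr {Qn N : ℕ} (H : Fin Qn → Fin Qn → Fin N → ℂ)
    (σ2 : Fin Qn → Fin N → ℝ) (q : Fin Qn) (p : Fin Qn → Fin N → ℝ) : Fin N → ℝ :=
  fun k => (σ2 q k + ∑ r ∈ Finset.univ.erase q, ‖H r q k‖ ^ 2 * p r k) / ‖H q q k‖ ^ 2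

open RealInnerProductSpace

lemma eucNorm_eq_norm {N : ℕ} (z : Fin N → ℝ) :
    eucNorm z = ‖(WithLp.equiv 2 (Fin N → ℝ)).symm z‖ := by
  rw [EuclideanSpace.norm_eq]
  simp [eucNorm, Real.norm_eq_abs, sq_abs]

lemma eucNorm_add_le {N : ℕ} (f g : Fin N → ℝ) :
    eucNorm (fun k => f k + g k) ≤ eucNorm f + eucNorm g := by
  rw [eucNorm_eq_norm, eucNorm_eq_norm, eucNorm_eq_norm]
  exact norm_add_le ((WithLp.equiv 2 (Fin N → ℝ)).symm f) ((WithLp.equiv 2 (Fin N → ℝ)).symm g)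

lemma eucNorm_zero {N : ℕ} : eucNorm (fun _ : Fin N => (0:ℝ)) = 0 := by
  simp [eucNorm]

lemma eucNorm_sum_le {N : ℕ} {ι : Type*} (s : Finset ι) (f : ι → Fin N → ℝ) :
    eucNorm (fun k => ∑ r ∈ s, f r k) ≤ ∑ r ∈ s, eucNorm (f r) := by
  classical
  induction s using Finset.induction_on with
  | empty => simp [eucNorm_zero]
  | insert a s hx ih =>
    calc eucNorm (fun k => ∑ r ∈ insert a s, f r k)
        = eucNorm (fun k => f a k + ∑ r ∈ s, f r k) := by
          congr 1; funext k; rw [Finset.sum_insert hx]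
      _ ≤ eucNorm (f a) + eucNorm (fun k => ∑ r ∈ s, f r k) := eucNorm_add_le _ _
      _ ≤ eucNorm (f a) + ∑ r ∈ s, eucNorm (f r) := by linarith
      _ = ∑ r ∈ insert a s, eucNorm (f r) := by rw [Finset.sum_insert hx]

lemma eucNorm_le_mul {N : ℕ} {f g : Fin N → ℝ} {M : ℝ} (hM : 0 ≤ M)
    (h : ∀ k, |f k| ≤ M * |g k|) : eucNorm f ≤ M * eucNorm g := by
  have h1 : ∀ k, f k ^ 2 ≤ M ^ 2 * g k ^ 2 := fun k => by
    nlinarith [h k, abs_nonneg (f k), sq_abs (f k), sq_abs (g k), abs_nonneg (g k)]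
  calc eucNorm f ≤ Real.sqrt (∑ k, M ^ 2 * g k ^ 2) :=
        Real.sqrt_le_sqrt (Finset.sum_le_sum fun k _ => h1 k)
    _ = M * eucNorm g := by
        rw [← Finset.mul_sum, Real.sqrt_mul (sq_nonneg M), Real.sqrt_sq hM]; rfl

lemma proj_nonexp {E : Type*} [NormedAddCommGroup E] [InnerProductSpace ℝ E]
    {K : Set E} (hK : Convex ℝ K) {u1 u2 v1 v2 : E} (hv1 : v1 ∈ K) (hv2 : v2 ∈ K)
    (h1 : ∀ w ∈ K, ‖u1 - v1‖ ≤ ‖u1 - w‖) (h2 : ∀ w ∈ K, ‖u2 - v2‖ ≤ ‖u2 - w‖) :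
    ‖v1 - v2‖ ≤ ‖u1 - u2‖ := by
  haveI : Nonempty K := ⟨⟨v1, hv1⟩⟩
  have bdd : BddBelow (Set.range fun w : K => ‖u1 - (w : E)‖) :=
    ⟨0, by rintro x ⟨w, rfl⟩; exact norm_nonneg _⟩
  have bdd2 : BddBelow (Set.range fun w : K => ‖u2 - (w : E)‖) :=
    ⟨0, by rintro x ⟨w, rfl⟩; exact norm_nonneg _⟩
  have e1 : ‖u1 - v1‖ = ⨅ w : K, ‖u1 - (w : E)‖ :=
    le_antisymm (le_ciInf fun w => h1 w w.2) (ciInf_le bdd ⟨v1, hv1⟩)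
  have e2 : ‖u2 - v2‖ = ⨅ w : K, ‖u2 - (w : E)‖ :=
    le_antisymm (le_ciInf fun w => h2 w w.2) (ciInf_le bdd2 ⟨v2, hv2⟩)
  have A : ⟪u1 - v1, v2 - v1⟫ ≤ 0 :=
    ((norm_eq_iInf_iff_real_inner_le_zero hK hv1).mp e1) v2 hv2
  have B : ⟪u2 - v2, v1 - v2⟫ ≤ 0 :=
    ((norm_eq_iInf_iff_real_inner_le_zero hK hv2).mp e2) v1 hv1
  have key : ⟪v1 - v2, v1 - v2⟫ ≤ ⟪u1 - u2, v1 - v2⟫ := by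
    have expand : ⟪u1 - u2, v1 - v2⟫ - ⟪v1 - v2, v1 - v2⟫
        = (-⟪u1 - v1, v2 - v1⟫) + (-⟪u2 - v2, v1 - v2⟫) := by
      simp only [inner_sub_left, inner_sub_right]
      ring
    linarith
  have h3 : ‖v1 - v2‖ ^ 2 ≤ ‖u1 - u2‖ * ‖v1 - v2‖ := by
    calc ‖v1 - v2‖ ^ 2 = ⟪v1 - v2, v1 - v2⟫ := (real_inner_self_eq_norm_sq _).symm
    _ ≤ ⟪u1 - u2, v1 - v2⟫ := key
    _ ≤ ‖u1 - u2‖ * ‖v1 - v2‖ := real_inner_le_norm _ _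
  rcases eq_or_lt_of_le (norm_nonneg (v1 - v2)) with h | h
  · rw [← h]; exact norm_nonneg _
  · nlinarith

/-- Contraction (blockwise Lipschitz) property of the SISO multiuser waterfilling
mapping: if `w1 q` (resp. `w2 q`) is the Euclidean projection of `−insr_q(p1)`
(resp. `−insr_q(p2)`) onto the simplex `{p ∈ ℝ₊ᴺ : Σ p = P q}`, then
`‖w1 q − w2 q‖₂ ≤ Σ_{r≠q} (max_k |H_rq(k)|²/|H_qq(k)|²) ‖p1 r − p2 r‖₂`. -/
theorem siso_waterfilling_contraction {Qn N : ℕ} (hN : 0 < N)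
    (H : Fin Qn → Fin Qn → Fin N → ℂ)
    (σ2 : Fin Qn → Fin N → ℝ) (hσ : ∀ q k, 0 ≤ σ2 q k)
    (hH : ∀ q k, H q q k ≠ 0)
    (P : Fin Qn → ℝ) (hP : ∀ q, 0 < P q)
    (p1 p2 : Fin Qn → Fin N → ℝ)
    (hp1 : ∀ r, (∀ k, 0 ≤ p1 r k) ∧ ∑ k, p1 r k = P r)
    (hp2 : ∀ r, (∀ k, 0 ≤ p2 r k) ∧ ∑ k, p2 r k = P r)
    (w1 w2 : Fin Qn → Fin N → ℝ)
    (hw1 : ∀ q, ((∀ k, 0 ≤ w1 q k) ∧ ∑ k, w1 q k = P q) ∧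
      ∀ z : Fin N → ℝ, (∀ k, 0 ≤ z k) → (∑ k, z k = P q) →
        eucNorm (fun k => w1 q k - (-insr H σ2 q p1 k)) ≤
          eucNorm (fun k => z k - (-insr H σ2 q p1 k)))
    (hw2 : ∀ q, ((∀ k, 0 ≤ w2 q k) ∧ ∑ k, w2 q k = P q) ∧
      ∀ z : Fin N → ℝ, (∀ k, 0 ≤ z k) → (∑ k, z k = P q) →
        eucNorm (fun k => w2 q k - (-insr H σ2 q p2 k)) ≤
          eucNorm (fun k => z k - (-insr H σ2 q p2 k))) :
    ∀ q, eucNorm (fun k => w1 q k - w2 q k) ≤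
      ∑ r ∈ Finset.univ.erase q,
        (⨆ k, ‖H r q k‖ ^ 2 / ‖H q q k‖ ^ 2) * eucNorm (fun k => p1 r k - p2 r k) := by
  intro q
  haveI : Nonempty (Fin N) := ⟨⟨0, hN⟩⟩
  classical
  set E := EuclideanSpace ℝ (Fin N)
  let ι : (Fin N → ℝ) → E := fun z => (WithLp.equiv 2 (Fin N → ℝ)).symm z
  let K : Set E := {z | (∀ k, 0 ≤ z k) ∧ ∑ k, z k = P q}
  have hK : Convex ℝ K := by
    intro x hx y hy a b ha hb hab
    refine ⟨fun k => ?_, ?_⟩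
    · have : (a • x + b • y) k = a * x k + b * y k := rfl
      rw [this]
      exact add_nonneg (mul_nonneg ha (hx.1 k)) (mul_nonneg hb (hy.1 k))
    · have : ∀ k, (a • x + b • y) k = a * x k + b * y k := fun _ => rfl
      simp only [this, Finset.sum_add_distrib, ← Finset.mul_sum, hx.2, hy.2]
      nlinarith [hP q]
  set u1 : E := ι (fun k => -insr H σ2 q p1 k) with hu1
  set u2 : E := ι (fun k => -insr H σ2 q p2 k) with hu2
  set v1 : E := ι (w1 q) with hv1d
  set v2 : E := ι (w2 q) with hv2d
  have hv1 : v1 ∈ K := ⟨(hw1 q).1.1, (hw1 q).1.2⟩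
  have hv2 : v2 ∈ K := ⟨(hw2 q).1.1, (hw2 q).1.2⟩
  have h1 : ∀ w ∈ K, ‖u1 - v1‖ ≤ ‖u1 - w‖ := by
    intro w hw
    have hle := (hw1 q).2 (fun k => w k) hw.1 hw.2
    rw [eucNorm_eq_norm, eucNorm_eq_norm] at hle
    have e1 : (WithLp.equiv 2 (Fin N → ℝ)).symm
        (fun k => w1 q k - (-insr H σ2 q p1 k)) = v1 - u1 := rfl
    have e2 : (WithLp.equiv 2 (Fin N → ℝ)).symm
        (fun k => w k - (-insr H σ2 q p1 k)) = w - u1 := rfl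
    rw [e1, e2] at hle
    rwa [norm_sub_rev u1 v1, norm_sub_rev u1 w]
  have h2 : ∀ w ∈ K, ‖u2 - v2‖ ≤ ‖u2 - w‖ := by
    intro w hw
    have hle := (hw2 q).2 (fun k => w k) hw.1 hw.2
    rw [eucNorm_eq_norm, eucNorm_eq_norm] at hle
    have e1 : (WithLp.equiv 2 (Fin N → ℝ)).symm
        (fun k => w2 q k - (-insr H σ2 q p2 k)) = v2 - u2 := rfl
    have e2 : (WithLp.equiv 2 (Fin N → ℝ)).symm
        (fun k => w k - (-insr H σ2 q p2 k)) = w - u2 := rfl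
    rw [e1, e2] at hle
    rwa [norm_sub_rev u2 v2, norm_sub_rev u2 w]
  have nonexp : ‖v1 - v2‖ ≤ ‖u1 - u2‖ := proj_nonexp hK hv1 hv2 h1 h2
  -- translate back to eucNorm
  have lhs_eq : eucNorm (fun k => w1 q k - w2 q k) = ‖v1 - v2‖ := by
    rw [eucNorm_eq_norm]; rfl
  have rhs_eq : ‖u1 - u2‖
      = eucNorm (fun k => insr H σ2 q p2 k - insr H σ2 q p1 k) := by
    rw [eucNorm_eq_norm]
    congr 1
    ext k
    show -insr H σ2 q p1 k - (-insr H σ2 q p2 k)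
        = insr H σ2 q p2 k - insr H σ2 q p1 k
    ring
  -- expand the insr difference as a sum
  let c : Fin Qn → Fin N → ℝ := fun r k =>
    (‖H r q k‖ ^ 2 / ‖H q q k‖ ^ 2) * (p2 r k - p1 r k)
  have diff_eq : (fun k => insr H σ2 q p2 k - insr H σ2 q p1 k)
      = fun k => ∑ r ∈ Finset.univ.erase q, c r k := by
    funext k
    simp only [insr, c]
    rw [div_sub_div_same]
    have hnum : (σ2 q k + ∑ r ∈ Finset.univ.erase q, ‖H r q k‖ ^ 2 * p2 r k) -
        (σ2 q k + ∑ r ∈ Finset.univ.erase q, ‖H r q k‖ ^ 2 * p1 r k)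
        = ∑ r ∈ Finset.univ.erase q, (‖H r q k‖ ^ 2 * p2 r k - ‖H r q k‖ ^ 2 * p1 r k) := by
      rw [Finset.sum_sub_distrib]; ring
    rw [hnum, Finset.sum_div]
    exact Finset.sum_congr rfl fun r _ => by ring
  -- per-user bounds
  have per : ∀ r ∈ Finset.univ.erase q, eucNorm (c r) ≤
      (⨆ k, ‖H r q k‖ ^ 2 / ‖H q q k‖ ^ 2) * eucNorm (fun k => p1 r k - p2 r k) := by
    intro r _
    set M := ⨆ k, ‖H r q k‖ ^ 2 / ‖H q q k‖ ^ 2 with hM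
    have hbdd : BddAbove (Set.range fun k => ‖H r q k‖ ^ 2 / ‖H q q k‖ ^ 2) :=
      (Set.finite_range _).bddAbove
    have hle : ∀ k, ‖H r q k‖ ^ 2 / ‖H q q k‖ ^ 2 ≤ M := fun k => le_ciSup hbdd k
    have hMnn : 0 ≤ M :=
      le_trans (div_nonneg (sq_nonneg _) (sq_nonneg _)) (hle (Classical.arbitrary _))
    refine eucNorm_le_mul hMnn fun k => ?_
    have h0 : 0 ≤ ‖H r q k‖ ^ 2 / ‖H q q k‖ ^ 2 := div_nonneg (sq_nonneg _) (sq_nonneg _)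
    calc |c r k| = (‖H r q k‖ ^ 2 / ‖H q q k‖ ^ 2) * |p2 r k - p1 r k| := by
          rw [abs_mul, abs_of_nonneg h0]
      _ = (‖H r q k‖ ^ 2 / ‖H q q k‖ ^ 2) * |p1 r k - p2 r k| := by rw [abs_sub_comm]
      _ ≤ M * |p1 r k - p2 r k| := by
          exact mul_le_mul_of_nonneg_right (hle k) (abs_nonneg _)
  calc eucNorm (fun k => w1 q k - w2 q k) = ‖v1 - v2‖ := lhs_eq
    _ ≤ ‖u1 - u2‖ := nonexp
    _ = eucNorm (fun k => insr H σ2 q p2 k - insr H σ2 q p1 k) := rhs_eq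
    _ = eucNorm (fun k => ∑ r ∈ Finset.univ.erase q, c r k) := by rw [diff_eq]
    _ ≤ ∑ r ∈ Finset.univ.erase q, eucNorm (c r) := eucNorm_sum_le _ _
    _ ≤ ∑ r ∈ Finset.univ.erase q,
        (⨆ k, ‖H r q k‖ ^ 2 / ‖H q q k‖ ^ 2) * eucNorm (fun k => p1 r k - p2 r k) :=
      Finset.sum_le_sum per
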